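/- Let K, n be positive integers; for k=1,…,K let M_k be n×m_k column-interval (0,1)-matrices and M_k' matrices with entries in {-1,0,1} such that M_k' ≡ M_k (mod 2) entrywise. Set A_k = M_k M_k^T, A_k' = M_k'(M_k')^T. Then for all t_k ≥ 0 and 1 ≤ p ≤ 2: ||Σ_k t_k A_k||_p ≥ ||Σ_k t_k A_k'||_p, where ||A||_p is the ℓ_p norm of the eigenvalue sequence. -/

import Mathlib

open scoped BigOperators
open Matrix
open MeasureTheory Set

namespace Stmt10Aux



/-- entries in {-1,0,1}, at most one `+1`, at most one `-1` -/
def ColP {ι : Type*} (z : ι → ℤ) : Prop :=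
  (∀ i, z i = -1 ∨ z i = 0 ∨ z i = 1) ∧
  (∀ i j, z i = 1 → z j = 1 → i = j) ∧
  (∀ i j, z i = -1 → z j = -1 → i = j)

lemma colP_comp {ι κ : Type*} {z : ι → ℤ} (h : ColP z) {f : κ → ι}
    (hf : Function.Injective f) : ColP (fun i => z (f i)) :=
  ⟨fun i => h.1 (f i), fun i j hi hj => hf (h.2.1 _ _ hi hj),
    fun i j hi hj => hf (h.2.2 _ _ hi hj)⟩

lemma det_colP : ∀ (r : ℕ) (A : Matrix (Fin r) (Fin r) ℤ), (∀ c, ColP (fun i => A i c)) →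
    A.det = -1 ∨ A.det = 0 ∨ A.det = 1 := by
  intro r
  induction r with
  | zero => intro A _; right; right; exact Matrix.det_fin_zero
  | succ r ih =>
    intro A hA
    by_cases hall : ∀ c, (∃ i, A i c = 1) ∧ (∃ i, A i c = -1)
    · right; left
      have hsum : ∀ c, ∑ i, A i c = 0 := by
        intro c
        obtain ⟨⟨i1, h1⟩, ⟨i2, h2⟩⟩ := hall c
        have hne : i1 ≠ i2 := by rintro rfl; rw [h1] at h2; exact absurd h2 (by decide)
        have hz : ∀ i, i ∉ ({i1, i2} : Finset _) → A i c = 0 := by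
          intro i hi
          simp only [Finset.mem_insert, Finset.mem_singleton] at hi
          push_neg at hi
          rcases (hA c).1 i with h | h | h
          · exact absurd ((hA c).2.2 i i2 h h2) hi.2
          · exact h
          · exact absurd ((hA c).2.1 i i1 h h1) hi.1
        calc ∑ i, A i c = ∑ i ∈ ({i1, i2} : Finset _), A i c :=
              (Finset.sum_subset (Finset.subset_univ _) (fun i _ hi => hz i hi)).symm
        _ = A i1 c + A i2 c := Finset.sum_pair hne
        _ = 0 := by rw [h1, h2]; ring
      have h0 : (∑ i, (1:ℤ) • A i) = 0 := by
        funext c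
        exact (Finset.sum_apply c _ _).trans (by simpa using hsum c)
      have hupd := Matrix.det_updateRow_sum A 0 (fun _ => (1:ℤ))
      rw [h0] at hupd
      have hz : (A.updateRow 0 (0 : Fin (r+1) → ℤ)).det = 0 :=
        Matrix.det_eq_zero_of_row_eq_zero 0 (fun j => by simp)
      rw [hz] at hupd
      simpa using hupd.symm
    · push_neg at hall
      obtain ⟨c, hc⟩ := hall
      have huniq : ∀ i i', A i c ≠ 0 → A i' c ≠ 0 → i = i' := by
        intro i i' hi hi'
        rcases (hA c).1 i with h | h | h
        · rcases (hA c).1 i' with h' | h' | h'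
          · exact (hA c).2.2 i i' h h'
          · exact absurd h' hi'
          · exact absurd h (hc ⟨i', h'⟩ i)
        · exact absurd h hi
        · rcases (hA c).1 i' with h' | h' | h'
          · exact absurd h' (hc ⟨i, h⟩ i')
          · exact absurd h' hi'
          · exact (hA c).2.1 i i' h h'
      by_cases hz : ∀ i, A i c = 0
      · right; left; exact Matrix.det_eq_zero_of_column_eq_zero c hz
      · push_neg at hz
        obtain ⟨i0, hi0⟩ := hz
        have hminor := ih (A.submatrix i0.succAbove c.succAbove) (fun c' => by
          exact colP_comp (hA (c.succAbove c')) (Fin.succAbove_right_injective))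
        rw [Matrix.det_succ_column A c, Finset.sum_eq_single i0
          (fun i _ hne => by
            have : A i c = 0 := by
              by_contra hne0
              exact hne (huniq i i0 hne0 hi0)
            rw [this]; ring)
          (fun h => absurd (Finset.mem_univ i0) h)]
        have hsign : ((-1:ℤ)) ^ ((i0 : ℕ) + (c : ℕ)) = 1 ∨ ((-1:ℤ)) ^ ((i0 : ℕ) + (c : ℕ)) = -1 :=
          neg_one_pow_eq_or ℤ _
        have hval : A i0 c = -1 ∨ A i0 c = 1 := by
          rcases (hA c).1 i0 with h | h | h
          · exact Or.inl h
          · exact absurd h hi0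
          · exact Or.inr h
        rcases hsign with hs | hs <;> rcases hval with hv | hv <;>
          rcases hminor with hd | hd | hd <;> rw [hs, hv, hd] <;> norm_num


def ICol {r : ℕ} (z : Fin r → ℤ) : Prop :=
  (∀ i, z i = 0 ∨ z i = 1) ∧
  (∀ i1 i2 i3 : Fin r, i1 ≤ i2 → i2 ≤ i3 → z i1 = 1 → z i3 = 1 → z i2 = 1)

/-- the difference matrix `1 - shift`. -/
def Dmat (r : ℕ) : Matrix (Fin r) (Fin r) ℤ :=
  Matrix.of fun i j => if i = j then 1 else if (j : ℕ) = (i : ℕ) + 1 then -1 else 0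

lemma det_Dmat (r : ℕ) : (Dmat r).det = 1 := by
  have h : (Dmat r).BlockTriangular id := by
    intro i j hij
    simp only [id] at hij
    have h1 : ¬ (i = j) := by exact fun h => absurd h (by rintro rfl; exact lt_irrefl _ hij)
    have h2 : ¬ ((j : ℕ) = (i : ℕ) + 1) := by omega
    simp [Dmat, h1, h2]
  rw [Matrix.det_of_upperTriangular h]
  simp [Dmat]

lemma Dmat_mul_apply {r : ℕ} (Z : Matrix (Fin r) (Fin r) ℤ) (i : Fin r) (c : Fin r) :
    (Dmat r * Z) i c = Z i c - (if h : (i : ℕ) + 1 < r then Z ⟨(i : ℕ) + 1, h⟩ c else 0) := by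
  rw [Matrix.mul_apply]
  by_cases h : (i : ℕ) + 1 < r
  · rw [Finset.sum_eq_add_of_mem i ⟨(i:ℕ)+1, h⟩ (Finset.mem_univ _) (Finset.mem_univ _)
      (by intro hh; exact absurd (congrArg Fin.val hh) (by simp))
      (fun j _ hj => by
        have hne : ¬ (i = j) := fun hh => hj.1 hh.symm
        have hne2 : ¬ ((j:ℕ) = (i:ℕ)+1) := fun hh => hj.2 (Fin.ext hh)
        simp [Dmat, hne, hne2])]
    have hne : ¬ (i = ⟨(i:ℕ)+1, h⟩) := by intro hh; exact absurd (congrArg Fin.val hh) (by simp)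
    simp [Dmat, hne, dif_pos h]
    ring
  · rw [dif_neg h, sub_zero, Finset.sum_eq_single i
      (fun j _ hj => by
        have hne : ¬ (i = j) := fun hh => hj hh.symm
        have hne2 : ¬ ((j:ℕ) = (i:ℕ)+1) := fun hh => h (hh ▸ j.isLt)
        simp [Dmat, hne, hne2])
      (fun hh => absurd (Finset.mem_univ i) hh)]
    simp [Dmat]

lemma colP_of_ICol {r : ℕ} (z : Fin r → ℤ) (hz : ICol z) :
    ColP (fun i => z i - (if h : (i : ℕ) + 1 < r then z ⟨(i : ℕ) + 1, h⟩ else 0)) := by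
  set y : Fin r → ℤ := fun i => z i - (if h : (i : ℕ) + 1 < r then z ⟨(i : ℕ) + 1, h⟩ else 0)
    with hy
  have yval : ∀ i : Fin r,
      y i = z i - (if h : (i : ℕ) + 1 < r then z ⟨(i : ℕ) + 1, h⟩ else 0) := fun _ => rfl
  have hmem : ∀ i, y i = -1 ∨ y i = 0 ∨ y i = 1 := by
    intro i
    rw [yval i]
    by_cases h : (i : ℕ) + 1 < r
    · rw [dif_pos h]; rcases hz.1 i with h1 | h1 <;> rcases hz.1 ⟨(i:ℕ)+1, h⟩ with h2 | h2 <;>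
        rw [h1, h2] <;> norm_num
    · rw [dif_neg h]; rcases hz.1 i with h1 | h1 <;> rw [h1] <;> norm_num
  have hone : ∀ i i' : Fin r, i < i' → y i = 1 → y i' = 1 → False := by
    intro i i' hlt h1 h1'
    have hb : (i : ℕ) + 1 < r := lt_of_le_of_lt (Nat.succ_le_of_lt hlt) i'.isLt
    have hzi : z i = 1 ∧ z ⟨(i:ℕ)+1, hb⟩ = 0 := by
      rw [yval i] at h1; simp only [dif_pos hb] at h1
      rcases hz.1 i with h2 | h2 <;> rcases hz.1 ⟨(i:ℕ)+1, hb⟩ with h3 | h3 <;>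
        rw [h2, h3] at h1 <;> first | exact ⟨h2, h3⟩ | (exfalso; omega)
    have hzi' : z i' = 1 := by
      rw [yval i'] at h1'
      by_cases h : (i' : ℕ) + 1 < r
      · simp only [dif_pos h] at h1'
        rcases hz.1 i' with h2 | h2 <;> rcases hz.1 ⟨(i':ℕ)+1, h⟩ with h3 | h3 <;>
          rw [h2, h3] at h1' <;> first | exact h2 | (exfalso; omega)
      · simp only [dif_neg h, sub_zero] at h1'; exact h1'
    have hmid : z ⟨(i:ℕ)+1, hb⟩ = 1 :=
      hz.2 i ⟨(i:ℕ)+1, hb⟩ i' (by simp [Fin.le_def]) (by simp [Fin.le_def]; omega) hzi.1 hzi'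
    rw [hzi.2] at hmid; exact absurd hmid (by norm_num)
  have hneg : ∀ i i' : Fin r, i < i' → y i = -1 → y i' = -1 → False := by
    intro i i' hlt h1 h1'
    have key : ∀ j : Fin r, y j = -1 → ∃ hj : (j : ℕ) + 1 < r,
        z j = 0 ∧ z ⟨(j:ℕ)+1, hj⟩ = 1 := by
      intro j hj
      rw [yval j] at hj
      by_cases h : (j : ℕ) + 1 < r
      · refine ⟨h, ?_⟩
        simp only [dif_pos h] at hj
        rcases hz.1 j with h2 | h2 <;> rcases hz.1 ⟨(j:ℕ)+1, h⟩ with h3 | h3 <;>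
          rw [h2, h3] at hj <;> first | exact ⟨h2, h3⟩ | (exfalso; omega)
      · simp only [dif_neg h, sub_zero] at hj
        rcases hz.1 j with h2 | h2 <;> rw [h2] at hj <;> exact absurd hj (by norm_num)
    obtain ⟨hb, hz0, hz1⟩ := key i h1
    obtain ⟨hb', hz0', hz1'⟩ := key i' h1'
    have hmid : z i' = 1 :=
      hz.2 ⟨(i:ℕ)+1, hb⟩ i' ⟨(i':ℕ)+1, hb'⟩ (by simp [Fin.le_def]; omega)
        (by simp [Fin.le_def]) hz1 hz1'
    rw [hz0'] at hmid; exact absurd hmid (by norm_num)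
  refine ⟨hmem, ?_, ?_⟩
  · intro i j hi hj
    by_contra hne
    rcases lt_or_gt_of_ne hne with h | h
    · exact hone i j h hi hj
    · exact hone j i h hj hi
  · intro i j hi hj
    by_contra hne
    rcases lt_or_gt_of_ne hne with h | h
    · exact hneg i j h hi hj
    · exact hneg j i h hj hi


lemma det_ICol {r : ℕ} (Z : Matrix (Fin r) (Fin r) ℤ) (h : ∀ c, ICol (fun i => Z i c)) :
    Z.det = -1 ∨ Z.det = 0 ∨ Z.det = 1 := by
  have hdet : (Dmat r * Z).det = Z.det := by rw [Matrix.det_mul, det_Dmat, one_mul]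
  rw [← hdet]
  apply det_colP
  intro c
  have heq : (fun i => (Dmat r * Z) i c) =
      (fun i : Fin r => Z i c - (if h : (i : ℕ) + 1 < r then Z ⟨(i : ℕ) + 1, h⟩ c else 0)) := by
    funext i; exact Dmat_mul_apply Z i c
  rw [heq]
  exact colP_of_ICol _ (h c)

lemma det_modEq {r : ℕ} (Z Z' : Matrix (Fin r) (Fin r) ℤ)
    (hm : ∀ i j, Z' i j ≡ Z i j [ZMOD 2]) : Z'.det ≡ Z.det [ZMOD 2] := by
  suffices key : ((Z'.det : ZMod 2)) = ((Z.det : ZMod 2)) by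
    simpa using (ZMod.intCast_eq_intCast_iff _ _ _).mp key
  have h1 : ((Z'.det : ZMod 2)) = (Z'.map (Int.cast : ℤ → ZMod 2)).det := by
    simpa using RingHom.map_det (Int.castRingHom (ZMod 2)) Z'
  have h2 : ((Z.det : ZMod 2)) = (Z.map (Int.cast : ℤ → ZMod 2)).det := by
    simpa using RingHom.map_det (Int.castRingHom (ZMod 2)) Z
  rw [h1, h2]
  congr 1
  ext i j
  simp only [Matrix.map_apply]
  exact (ZMod.intCast_eq_intCast_iff _ _ _).mpr (hm i j)

lemma det_sq_le {r : ℕ} (Z Z' : Matrix (Fin r) (Fin r) ℤ)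
    (hI : ∀ c, ICol (fun i => Z i c))
    (hm : ∀ i j, Z' i j ≡ Z i j [ZMOD 2]) : Z.det ^ 2 ≤ Z'.det ^ 2 := by
  have hdm := det_modEq Z Z' hm
  rcases det_ICol Z hI with h | h | h
  · have hne : Z'.det ≠ 0 := by
      intro h0; rw [h0, h] at hdm; exact absurd hdm (by decide)
    have h1 : 1 ≤ |Z'.det| := Int.one_le_abs (by simpa using hne)
    calc Z.det ^ 2 = 1 := by rw [h]; ring
    _ ≤ Z'.det ^ 2 := by nlinarith [sq_abs Z'.det]
  · rw [h]; positivity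
  · have hne : Z'.det ≠ 0 := by
      intro h0; rw [h0, h] at hdm; exact absurd hdm (by decide)
    have h1 : 1 ≤ |Z'.det| := Int.one_le_abs (by simpa using hne)
    calc Z.det ^ 2 = 1 := by rw [h]; ring
    _ ≤ Z'.det ^ 2 := by nlinarith [sq_abs Z'.det]



lemma gram_expand {ι : Type*} [Fintype ι] [DecidableEq ι] {n : ℕ} (C : Matrix (Fin n) ι ℝ) :
    (C * Cᵀ).det = ∑ h : Fin n → ι, (∏ i, C i (h i)) * ((Cᵀ).submatrix h id).det := by
  have hM : (C * Cᵀ) = Matrix.of (fun i => ∑ c : ι, C i c • (fun j => Cᵀ c j)) := by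
    ext i j
    simp [Matrix.mul_apply, Finset.sum_apply]
  have h1 : (C * Cᵀ).det
      = (Matrix.detRowAlternating : ((Fin n) → ℝ) [⋀^Fin n]→ₗ[ℝ] ℝ).toMultilinearMap
        (fun i => ∑ c : ι, C i c • (fun j => Cᵀ c j)) := by
    rw [hM]; rfl
  rw [h1, MultilinearMap.map_sum]
  refine Finset.sum_congr rfl (fun h _ => ?_)
  rw [MultilinearMap.map_smul_univ]
  rfl

lemma cb_symm {ι : Type*} [Fintype ι] [DecidableEq ι] {n : ℕ} (C : Matrix (Fin n) ι ℝ) :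
    (n.factorial : ℝ) * (C * Cᵀ).det = ∑ g : Fin n → ι, ((C.submatrix id g).det) ^ 2 := by
  classical
  have step1 : ∀ g : Fin n → ι, ((C.submatrix id g).det) ^ 2
      = ∑ σ : Equiv.Perm (Fin n),
          (Equiv.Perm.sign σ : ℤ) * (∏ i, C (σ i) (g i)) * ((Cᵀ).submatrix g id).det := by
    intro g
    have ht : (C.submatrix id g)ᵀ = (Cᵀ).submatrix g id := by
      rw [Matrix.transpose_submatrix]
    have h2 : ((C.submatrix id g).det) ^ 2
        = (C.submatrix id g).det * ((Cᵀ).submatrix g id).det := by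
      rw [sq, ← ht, Matrix.det_transpose]
    rw [h2, Matrix.det_apply' (C.submatrix id g), Finset.sum_mul]
    refine Finset.sum_congr rfl (fun σ _ => ?_)
    simp [Matrix.submatrix_apply]
  rw [Finset.sum_congr rfl (fun g _ => step1 g), Finset.sum_comm]
  have step2 : ∀ σ : Equiv.Perm (Fin n),
      ∑ g : Fin n → ι,
          (Equiv.Perm.sign σ : ℤ) * (∏ i, C (σ i) (g i)) * ((Cᵀ).submatrix g id).det
      = (C * Cᵀ).det := by
    intro σ
    let e : (Fin n → ι) ≃ (Fin n → ι) :=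
      ⟨fun h => h ∘ σ, fun g => g ∘ σ.symm,
        fun h => by funext i; simp, fun g => by funext i; simp⟩
    rw [← Equiv.sum_comp e (fun g =>
      (Equiv.Perm.sign σ : ℤ) * (∏ i, C (σ i) (g i)) * ((Cᵀ).submatrix g id).det)]
    have hterm : ∀ h : Fin n → ι,
        (Equiv.Perm.sign σ : ℤ) * (∏ i, C (σ i) ((e h) i)) * ((Cᵀ).submatrix (e h) id).det
        = (∏ i, C i (h i)) * ((Cᵀ).submatrix h id).det := by
      intro h
      have he : e h = h ∘ σ := rfl
      have hprod : (∏ i, C (σ i) ((h ∘ σ) i)) = ∏ i, C i (h i) :=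
        Equiv.prod_comp σ (fun i => C i (h i))
      have hsub : (Cᵀ).submatrix (h ∘ σ) id = ((Cᵀ).submatrix h id).submatrix σ id := by
        rw [Matrix.submatrix_submatrix]; rfl
      have hs : ((Equiv.Perm.sign σ : ℤ) : ℝ) * ((Equiv.Perm.sign σ : ℤ) : ℝ) = 1 := by
        rcases Int.units_eq_one_or (Equiv.Perm.sign σ) with hu | hu <;> rw [hu] <;> norm_num
      rw [he, hprod, hsub, Matrix.det_permute]
      push_cast
      linear_combination ((∏ i, C i (h i)) * (((Cᵀ).submatrix h id).det)) * hs
    rw [Finset.sum_congr rfl (fun h _ => hterm h)]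
    exact (gram_expand C).symm
  rw [Finset.sum_congr rfl (fun σ _ => step2 σ)]
  rw [Finset.sum_const, Finset.card_univ, Fintype.card_perm, Fintype.card_fin, nsmul_eq_mul]



section DetIneq

variable {K n : ℕ} {m : Fin K → ℕ}

/-- weighted column matrix: all the columns of the `N k` together with the identity -/
noncomputable def Bmat (N : ∀ k : Fin K, Matrix (Fin n) (Fin (m k)) ℤ)
    (t : Fin K → ℝ) (s : ℝ) : Matrix (Fin n) ((Σ k : Fin K, Fin (m k)) ⊕ Fin n) ℝ :=
  Matrix.of fun i c =>
    Sum.elim (fun a : Σ k : Fin K, Fin (m k) => Real.sqrt (t a.1) * (N a.1 i a.2 : ℝ))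
      (fun i' : Fin n => Real.sqrt s * (if i = i' then (1:ℝ) else 0)) c

lemma Bmat_gram (N : ∀ k : Fin K, Matrix (Fin n) (Fin (m k)) ℤ)
    (t : Fin K → ℝ) (ht : ∀ k, 0 ≤ t k) (s : ℝ) (hs : 0 ≤ s) :
    Bmat N t s * (Bmat N t s)ᵀ
      = s • (1 : Matrix (Fin n) (Fin n) ℝ) + ∑ k, t k • ((N k * (N k)ᵀ).map ((↑) : ℤ → ℝ)) := by
  ext i j
  rw [Matrix.mul_apply]
  rw [Fintype.sum_sum_type]
  have h2 : (∑ i' : Fin n,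
      Bmat N t s i (Sum.inr i') * (Bmat N t s)ᵀ (Sum.inr i') j) = s • (1 : Matrix (Fin n) (Fin n) ℝ) i j := by
    rw [Finset.sum_eq_single i (fun i' _ hne => by
        simp [Bmat, Matrix.transpose_apply, Ne.symm hne]
      ) (fun h => absurd (Finset.mem_univ i) h)]
    by_cases hij : j = i
    · subst hij
      simp [Bmat, Matrix.one_apply, Real.mul_self_sqrt hs]
    · simp [Bmat, Matrix.one_apply, hij, Ne.symm hij]
  have h1 : (∑ a : Σ k : Fin K, Fin (m k),
      Bmat N t s i (Sum.inl a) * (Bmat N t s)ᵀ (Sum.inl a) j)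
      = ∑ k, t k * ∑ l, ((N k i l : ℝ) * (N k j l : ℝ)) := by
    rw [← Finset.univ_sigma_univ, Finset.sum_sigma]
    refine Finset.sum_congr rfl (fun k _ => ?_)
    rw [Finset.mul_sum]
    refine Finset.sum_congr rfl (fun l _ => ?_)
    simp only [Bmat, Matrix.transpose_apply, Matrix.of_apply, Sum.elim_inl]
    rw [show Real.sqrt (t k) * (N k i l : ℝ) * (Real.sqrt (t k) * (N k j l : ℝ))
      = (Real.sqrt (t k) * Real.sqrt (t k)) * ((N k i l : ℝ) * (N k j l : ℝ)) from by ring,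
      Real.mul_self_sqrt (ht k)]
  rw [h1, h2, add_comm]
  simp only [Matrix.add_apply, Matrix.sum_apply, Matrix.smul_apply, Matrix.map_apply,
    Matrix.mul_apply, Matrix.transpose_apply, smul_eq_mul, Finset.mul_sum]
  push_cast
  simp [Finset.mul_sum]

end DetIneq



section Spectral
variable {n : ℕ} {A : Matrix (Fin n) (Fin n) ℝ} (hA : A.IsHermitian)

lemma star_mul_self_unitary :
    (star (hA.eigenvectorUnitary : Matrix (Fin n) (Fin n) ℝ)) * hA.eigenvectorUnitary = 1 :=
  (Matrix.mem_unitaryGroup_iff'.mp (hA.eigenvectorUnitary).2)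

lemma mul_star_self_unitary :
    (hA.eigenvectorUnitary : Matrix (Fin n) (Fin n) ℝ) * star (hA.eigenvectorUnitary : Matrix (Fin n) (Fin n) ℝ) = 1 :=
  (Matrix.mem_unitaryGroup_iff.mp (hA.eigenvectorUnitary).2)

lemma det_shift (s : ℝ) :
    (s • (1 : Matrix (Fin n) (Fin n) ℝ) + A).det = ∏ i, (s + hA.eigenvalues i) := by
  set U : Matrix (Fin n) (Fin n) ℝ := (hA.eigenvectorUnitary : Matrix (Fin n) (Fin n) ℝ) with hU
  set d : Fin n → ℝ := RCLike.ofReal ∘ hA.eigenvalues with hd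
  have hsp : A = U * Matrix.diagonal d * star U := hA.spectral_theorem
  have h1 : U * (s • (1 : Matrix (Fin n) (Fin n) ℝ)) * star U = s • (1 : Matrix (Fin n) (Fin n) ℝ) := by
    rw [Matrix.mul_smul, Matrix.mul_one, Matrix.smul_mul, mul_star_self_unitary]
  have key : s • (1 : Matrix (Fin n) (Fin n) ℝ) + A
      = U * (s • (1 : Matrix (Fin n) (Fin n) ℝ) + Matrix.diagonal d) * star U := by
    rw [Matrix.mul_add, Matrix.add_mul, h1, ← hsp]
  have hdiag : s • (1 : Matrix (Fin n) (Fin n) ℝ) + Matrix.diagonal d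
      = Matrix.diagonal (fun i => s + d i) := by
    ext i j
    by_cases h : i = j
    · subst h; simp [Matrix.one_apply, Matrix.diagonal]
    · simp [Matrix.one_apply, Matrix.diagonal, h]
  have hUdet : U.det * (star U).det = 1 := by
    rw [← Matrix.det_mul, mul_star_self_unitary, Matrix.det_one]
  rw [key, Matrix.det_mul, Matrix.det_mul, hdiag, Matrix.det_diagonal]
  calc U.det * (∏ i, (s + d i)) * (star U).det
      = (U.det * (star U).det) * ∏ i, (s + d i) := by ring
  _ = ∏ i, (s + d i) := by rw [hUdet, one_mul]
  _ = ∏ i, (s + hA.eigenvalues i) := by simp [hd]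

lemma trace_eq_sum_eigs : A.trace = ∑ i, hA.eigenvalues i := by
  set U : Matrix (Fin n) (Fin n) ℝ := (hA.eigenvectorUnitary : Matrix (Fin n) (Fin n) ℝ) with hU
  set d : Fin n → ℝ := RCLike.ofReal ∘ hA.eigenvalues with hd
  have hsp : A = U * Matrix.diagonal d * star U := hA.spectral_theorem
  conv_lhs => rw [hsp]
  rw [Matrix.trace_mul_cycle, star_mul_self_unitary, one_mul, Matrix.trace_diagonal]
  simp [hd]

lemma trace_sq_eq_sum_eigs_sq : (A * A).trace = ∑ i, (hA.eigenvalues i) ^ 2 := by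
  set U : Matrix (Fin n) (Fin n) ℝ := (hA.eigenvectorUnitary : Matrix (Fin n) (Fin n) ℝ) with hU
  set d : Fin n → ℝ := RCLike.ofReal ∘ hA.eigenvalues with hd
  have hsp : A = U * Matrix.diagonal d * star U := hA.spectral_theorem
  have hAA : A * A = U * (Matrix.diagonal d * Matrix.diagonal d) * star U := by
    conv_lhs => rw [hsp]
    have h2 : (U * Matrix.diagonal d * star U) * (U * Matrix.diagonal d * star U)
        = U * (Matrix.diagonal d * ((star U * U) * (Matrix.diagonal d * star U))) := by
      simp only [Matrix.mul_assoc]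
    rw [h2, star_mul_self_unitary, one_mul]
    simp only [Matrix.mul_assoc]
  rw [hAA, Matrix.trace_mul_cycle, star_mul_self_unitary, one_mul,
    Matrix.diagonal_mul_diagonal, Matrix.trace_diagonal]
  simp [hd, sq]

end Spectral


noncomputable def F (p x s : ℝ) : ℝ := s ^ (p - 2) * (x - s * Real.log (1 + x / s))

lemma g_nonneg {x s : ℝ} (hx : 0 ≤ x) (hs : 0 < s) : 0 ≤ x - s * Real.log (1 + x / s) := by
  have h1 : Real.log (1 + x / s) ≤ x / s := by
    have := Real.log_le_sub_one_of_pos (x := 1 + x / s) (by positivity)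
    linarith
  have h2 : s * Real.log (1 + x / s) ≤ s * (x / s) :=
    mul_le_mul_of_nonneg_left h1 hs.le
  rw [mul_div_cancel₀ x hs.ne'] at h2
  linarith

lemma g_le_self {x s : ℝ} (hx : 0 ≤ x) (hs : 0 < s) : x - s * Real.log (1 + x / s) ≤ x := by
  have h1 : 0 ≤ Real.log (1 + x / s) := Real.log_nonneg
    (by have : 0 ≤ x / s := div_nonneg hx hs.le; linarith)
  nlinarith

lemma g_le_sq {x s : ℝ} (hx : 0 ≤ x) (hs : 0 < s) :
    x - s * Real.log (1 + x / s) ≤ x ^ 2 / s := by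
  have ht : (0:ℝ) < 1 + x / s := by positivity
  have h1 : 1 - (1 + x / s)⁻¹ ≤ Real.log (1 + x / s) := by
    have := Real.log_le_sub_one_of_pos (x := (1 + x / s)⁻¹) (by positivity)
    rw [Real.log_inv] at this
    linarith
  have hxs : 1 + x / s = (s + x) / s := by field_simp
  have hinv : (1 + x / s)⁻¹ = s / (s + x) := by rw [hxs, inv_div]
  rw [hinv] at h1
  have h2 : s * (1 - s / (s + x)) ≤ s * Real.log (1 + x / s) :=
    mul_le_mul_of_nonneg_left h1 hs.le
  have h3 : x - s * (1 - s / (s + x)) = x ^ 2 / (s + x) := by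
    field_simp
    ring
  have h4 : x ^ 2 / (s + x) ≤ x ^ 2 / s := by
    gcongr
    linarith
  linarith

lemma F_nonneg {p x s : ℝ} (hx : 0 ≤ x) (hs : 0 < s) : 0 ≤ F p x s :=
  mul_nonneg (Real.rpow_nonneg hs.le _) (g_nonneg hx hs)

lemma F_continuousOn {p x : ℝ} (hx : 0 ≤ x) : ContinuousOn (F p x) (Ioi 0) := by
  apply ContinuousOn.mul
  · exact ContinuousOn.rpow_const continuousOn_id (fun s hs => Or.inl (ne_of_gt hs))
  · apply ContinuousOn.sub continuousOn_const
    apply ContinuousOn.mul continuousOn_id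
    apply ContinuousOn.log
    · exact ContinuousOn.add continuousOn_const
        (ContinuousOn.div continuousOn_const continuousOn_id (fun s hs => ne_of_gt hs))
    · intro s hs
      have hs0 : (0:ℝ) < s := hs
      have : (0:ℝ) < 1 + x / s := by positivity
      exact ne_of_gt this

lemma F_integrableOn {p : ℝ} (hp1 : 1 < p) (hp2 : p < 2) {x : ℝ} (hx : 0 ≤ x) :
    IntegrableOn (F p x) (Ioi 0) := by
  have hunion : Ioc (0:ℝ) 1 ∪ Ioi 1 = Ioi 0 := Ioc_union_Ioi_eq_Ioi zero_le_one
  rw [← hunion, integrableOn_union]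
  constructor
  · have hbase : IntegrableOn (fun s : ℝ => s ^ (p-2)) (Ioc 0 1) :=
      (integrableOn_Ioc_iff_integrableOn_Ioo).mpr
        ((intervalIntegral.integrableOn_Ioo_rpow_iff one_pos).mpr (by linarith))
    have hbound : IntegrableOn (fun s : ℝ => s ^ (p-2) * x) (Ioc 0 1) := hbase.mul_const x
    apply Integrable.mono' hbound
      (((F_continuousOn hx).mono Ioc_subset_Ioi_self).aestronglyMeasurable measurableSet_Ioc)
    filter_upwards [ae_restrict_mem measurableSet_Ioc] with s hs
    have hs0 : 0 < s := hs.1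
    rw [Real.norm_eq_abs, abs_of_nonneg (F_nonneg hx hs0)]
    exact mul_le_mul_of_nonneg_left (g_le_self hx hs0) (Real.rpow_nonneg hs0.le _)
  · have hbound : IntegrableOn (fun s : ℝ => s ^ (p-3) * x ^ 2) (Ioi 1) :=
      ((integrableOn_Ioi_rpow_iff one_pos).mpr (by linarith)).mul_const _
    apply Integrable.mono' hbound
      (((F_continuousOn hx).mono (Ioi_subset_Ioi zero_le_one)).aestronglyMeasurable
        measurableSet_Ioi)
    filter_upwards [ae_restrict_mem measurableSet_Ioi] with s hs
    have hs0 : (0:ℝ) < s := lt_trans one_pos hs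
    rw [Real.norm_eq_abs, abs_of_nonneg (F_nonneg hx hs0)]
    have h1 : F p x s ≤ s ^ (p-2) * (x ^ 2 / s) :=
      mul_le_mul_of_nonneg_left (g_le_sq hx hs0) (Real.rpow_nonneg hs0.le _)
    have h2 : s ^ (p-2) * (x ^ 2 / s) = s ^ (p-3) * x ^ 2 := by
      rw [show p - 3 = (p-2) + (-1) from by ring, Real.rpow_add hs0, Real.rpow_neg_one]
      field_simp
    rw [h2] at h1
    exact h1

lemma F_integral_scale {p : ℝ} {x : ℝ} (hx : 0 < x) :
    ∫ s in Ioi (0:ℝ), F p x s = x ^ p * ∫ s in Ioi (0:ℝ), F p 1 s := by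
  have h := integral_comp_mul_left_Ioi (fun s => F p x s) 0 hx
  rw [mul_zero] at h
  have h2 : ∫ u in Ioi (0:ℝ), F p x (x * u) = ∫ u in Ioi (0:ℝ), x ^ (p-1) * F p 1 u := by
    apply setIntegral_congr_fun measurableSet_Ioi
    intro u hu
    have hu0 : (0:ℝ) < u := hu
    show (x * u) ^ (p - 2) * (x - x * u * Real.log (1 + x / (x * u)))
      = x ^ (p-1) * (u ^ (p - 2) * (1 - u * Real.log (1 + 1 / u)))
    have e1 : x / (x * u) = 1 / u := by
      field_simp
    rw [e1, Real.mul_rpow hx.le hu0.le,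
      show x ^ (p-2) * u ^ (p-2) * (x - x * u * Real.log (1 + 1/u))
        = (x ^ (p-2) * x) * (u ^ (p-2) * (1 - u * Real.log (1 + 1/u))) from by ring,
      ← Real.rpow_add_one hx.ne' (p-2), show p - 2 + 1 = p - 1 from by ring]
  rw [h2, MeasureTheory.integral_const_mul, smul_eq_mul] at h
  have hxne : x ≠ 0 := hx.ne'
  have : x * (x ^ (p-1) * ∫ s in Ioi (0:ℝ), F p 1 s) = x * (x⁻¹ * ∫ s in Ioi (0:ℝ), F p x s) := by
    rw [h]
  rw [← mul_assoc, ← mul_assoc, mul_inv_cancel₀ hxne, one_mul] at this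
  rw [← this, show x * x ^ (p-1) = x ^ p from by
    rw [show x * x ^ (p-1) = x ^ (1:ℝ) * x ^ (p-1) from by rw [Real.rpow_one],
      ← Real.rpow_add hx, show (1:ℝ) + (p-1) = p from by ring]]

lemma I1_pos {p : ℝ} (hp1 : 1 < p) (hp2 : p < 2) : 0 < ∫ s in Ioi (0:ℝ), F p 1 s := by
  rw [setIntegral_pos_iff_support_of_nonneg_ae ?hnn (F_integrableOn hp1 hp2 zero_le_one)]
  case hnn =>
    filter_upwards [ae_restrict_mem measurableSet_Ioi] with s hs
    exact F_nonneg zero_le_one hs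
  have hsupp : Ioi (0:ℝ) ⊆ Function.support (F p 1) := by
    intro s hs
    have hs0 : (0:ℝ) < s := hs
    apply ne_of_gt
    apply mul_pos (Real.rpow_pos_of_pos hs0 _)
    have hlt : Real.log (1 + 1/s) < 1/s := by
      have hne : (1:ℝ) + 1/s ≠ 1 := by
        have : (0:ℝ) < 1/s := by positivity
        intro h; rw [add_eq_left] at h; linarith
      have := Real.log_lt_sub_one_of_pos (x := 1 + 1/s) (by positivity) hne
      linarith
    have h2 : s * Real.log (1 + 1/s) < s * (1/s) := mul_lt_mul_of_pos_left hlt hs0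
    rw [mul_one_div, div_self hs0.ne'] at h2
    linarith
  have heq : Function.support (F p 1) ∩ Ioi 0 = Ioi 0 :=
    Set.inter_eq_self_of_subset_right hsupp
  rw [heq, Real.volume_Ioi]
  exact ENNReal.zero_lt_top

lemma rpow_eq_integral {p : ℝ} (hp1 : 1 < p) (hp2 : p < 2) {x : ℝ} (hx : 0 ≤ x) :
    x ^ p = (∫ s in Ioi (0:ℝ), F p 1 s)⁻¹ * ∫ s in Ioi (0:ℝ), F p x s := by
  rcases eq_or_lt_of_le hx with h0 | h0
  · rw [← h0, Real.zero_rpow (by linarith)]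
    have : ∀ s : ℝ, F p 0 s = 0 := by
      intro s
      show s ^ (p-2) * ((0:ℝ) - s * Real.log (1 + 0 / s)) = 0
      rw [zero_div, add_zero, Real.log_one]
      ring
    simp [this]
  · rw [F_integral_scale h0, mul_comm ((∫ s in Ioi (0:ℝ), F p 1 s))⁻¹, mul_assoc,
      mul_comm ((∫ s in Ioi (0:ℝ), F p 1 s)), inv_mul_cancel₀ (I1_pos hp1 hp2).ne', mul_one]


lemma det_ineq {K n : ℕ} {m : Fin K → ℕ}
    (M M' : ∀ k : Fin K, Matrix (Fin n) (Fin (m k)) ℤ)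
    (h01 : ∀ k i j, M k i j = 0 ∨ M k i j = 1)
    (hint : ∀ k j, ∀ i₁ i₂ i₃ : Fin n, i₁ ≤ i₂ → i₂ ≤ i₃ →
      M k i₁ j = 1 → M k i₃ j = 1 → M k i₂ j = 1)
    (hmod : ∀ k i j, M' k i j ≡ M k i j [ZMOD 2])
    (t : Fin K → ℝ) (ht : ∀ k, 0 ≤ t k) (s : ℝ) (hs : 0 ≤ s) :
    (s • (1 : Matrix (Fin n) (Fin n) ℝ) + ∑ k, t k • ((M k * (M k)ᵀ).map ((↑) : ℤ → ℝ))).det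
    ≤ (s • (1 : Matrix (Fin n) (Fin n) ℝ)
        + ∑ k, t k • ((M' k * (M' k)ᵀ).map ((↑) : ℤ → ℝ))).det := by
  rw [← Bmat_gram M t ht s hs, ← Bmat_gram M' t ht s hs]
  have hfac : (0:ℝ) < (n.factorial : ℝ) := by
    exact_mod_cast Nat.cast_pos.mpr n.factorial_pos
  rw [← mul_le_mul_iff_right₀ hfac, cb_symm (Bmat M t s), cb_symm (Bmat M' t s)]
  refine Finset.sum_le_sum (fun g _ => ?_)
  set w : ((Σ k : Fin K, Fin (m k)) ⊕ Fin n) → ℝ :=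
    Sum.elim (fun a => Real.sqrt (t a.1)) (fun _ => Real.sqrt s) with hw
  set Vz : ((Σ k : Fin K, Fin (m k)) ⊕ Fin n) → Fin n → ℤ :=
    Sum.elim (fun a i => M a.1 i a.2) (fun i' i => if i = i' then 1 else 0) with hV
  set Vz' : ((Σ k : Fin K, Fin (m k)) ⊕ Fin n) → Fin n → ℤ :=
    Sum.elim (fun a i => M' a.1 i a.2) (fun i' i => if i = i' then 1 else 0) with hV'
  set Z : Matrix (Fin n) (Fin n) ℤ := Matrix.of (fun i j => Vz (g j) i) with hZ
  set Z' : Matrix (Fin n) (Fin n) ℤ := Matrix.of (fun i j => Vz' (g j) i) with hZ'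
  have hB : (Bmat M t s).submatrix id g
      = Matrix.of (fun i j => w (g j) * (Z.map ((↑) : ℤ → ℝ)) i j) := by
    ext i j
    rcases hgj : g j with a | i' <;>
      simp [Bmat, hw, hZ, hV, Matrix.submatrix_apply, hgj, apply_ite ((↑) : ℤ → ℝ)]
  have hB' : (Bmat M' t s).submatrix id g
      = Matrix.of (fun i j => w (g j) * (Z'.map ((↑) : ℤ → ℝ)) i j) := by
    ext i j
    rcases hgj : g j with a | i' <;>
      simp [Bmat, hw, hZ', hV', Matrix.submatrix_apply, hgj, apply_ite ((↑) : ℤ → ℝ)]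
  have hmapdet : ∀ Y : Matrix (Fin n) (Fin n) ℤ,
      (Y.map ((↑) : ℤ → ℝ)).det = ((Y.det : ℤ) : ℝ) := by
    intro Y
    simpa using (RingHom.map_det (Int.castRingHom ℝ) Y).symm
  have hdet1 : ((Bmat M t s).submatrix id g).det = (∏ j, w (g j)) * ((Z.det : ℤ) : ℝ) := by
    rw [hB, Matrix.det_mul_row, hmapdet]
  have hdet1' : ((Bmat M' t s).submatrix id g).det = (∏ j, w (g j)) * ((Z'.det : ℤ) : ℝ) := by
    rw [hB', Matrix.det_mul_row, hmapdet]
  rw [hdet1, hdet1', mul_pow, mul_pow]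
  refine mul_le_mul_of_nonneg_left ?_ (sq_nonneg _)
  have hsq : Z.det ^ 2 ≤ Z'.det ^ 2 := by
    apply det_sq_le
    · intro c
      rcases hgc : g c with a | i'
      · refine ⟨fun i => ?_, fun i1 i2 i3 h12 h23 h1 h3 => ?_⟩
        · simp only [hZ, hV, Matrix.of_apply, hgc, Sum.elim_inl]
          exact h01 a.1 i a.2
        · simp only [hZ, hV, Matrix.of_apply, hgc, Sum.elim_inl] at h1 h3 ⊢
          exact hint a.1 a.2 i1 i2 i3 h12 h23 h1 h3
      · constructor
        · intro i
          simp only [hZ, hV, Matrix.of_apply, hgc, Sum.elim_inr]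
          by_cases h : i = i' <;> simp [h]
        · intro i1 i2 i3 h12 h23 h1 h3
          simp only [hZ, hV, Matrix.of_apply, hgc, Sum.elim_inr] at h1 h3 ⊢
          have e1 : i1 = i' := by by_contra h; rw [if_neg h] at h1; exact absurd h1 (by decide)
          have e3 : i3 = i' := by by_contra h; rw [if_neg h] at h3; exact absurd h3 (by decide)
          have : i2 = i' := le_antisymm (e3 ▸ h23) (e1 ▸ h12)
          rw [if_pos this]
    · intro i j
      rcases hgj : g j with a | i'
      · simp only [hZ, hZ', hV, hV', Matrix.of_apply, hgj, Sum.elim_inl]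
        exact hmod a.1 i a.2
      · simp only [hZ, hZ', hV, hV', Matrix.of_apply, hgj, Sum.elim_inr]
        exact Int.ModEq.refl _
  calc (((Z.det : ℤ) : ℝ)) ^ 2 = (((Z.det ^ 2 : ℤ) : ℤ) : ℝ) := by push_cast; ring
  _ ≤ (((Z'.det ^ 2 : ℤ) : ℤ) : ℝ) := by exact_mod_cast hsq
  _ = (((Z'.det : ℤ) : ℝ)) ^ 2 := by push_cast; ring

end Stmt10Aux

open Stmt10Aux

theorem stmt10 (K n : ℕ) (hK : 0 < K) (hn : 0 < n) (m : Fin K → ℕ)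
    (M M' : ∀ k : Fin K, Matrix (Fin n) (Fin (m k)) ℤ)
    (h01 : ∀ k i j, M k i j = 0 ∨ M k i j = 1)
    (hint : ∀ k j, ∀ i₁ i₂ i₃ : Fin n, i₁ ≤ i₂ → i₂ ≤ i₃ →
      M k i₁ j = 1 → M k i₃ j = 1 → M k i₂ j = 1)
    (h101 : ∀ k i j, M' k i j = -1 ∨ M' k i j = 0 ∨ M' k i j = 1)
    (hmod : ∀ k i j, M' k i j ≡ M k i j [ZMOD 2])
    (t : Fin K → ℝ) (ht : ∀ k, 0 ≤ t k) (p : ℝ) (hp1 : 1 ≤ p) (hp2 : p ≤ 2)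
    (A A' : Matrix (Fin n) (Fin n) ℝ)
    (hAdef : A = ∑ k, t k • ((M k * (M k)ᵀ).map ((↑) : ℤ → ℝ)))
    (hA'def : A' = ∑ k, t k • ((M' k * (M' k)ᵀ).map ((↑) : ℤ → ℝ)))
    (hA : A.IsHermitian) (hA' : A'.IsHermitian) :
    (∑ i, (hA'.eigenvalues i) ^ p) ^ (1 / p) ≤
      (∑ i, (hA.eigenvalues i) ^ p) ^ (1 / p) := by
  -- basic entry facts
  have habs : ∀ k i l, |M' k i l| = M k i l := by
    intro k i l
    have hm := hmod k i l
    rcases h01 k i l with h | h <;> rcases h101 k i l with h' | h' | h' <;>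
      rw [h, h'] at hm ⊢ <;> first | rfl | exact absurd hm (by decide) | norm_num
  have hsq : ∀ k i l, (M' k i l) ^ 2 = (M k i l) ^ 2 := by
    intro k i l
    rw [← sq_abs (M' k i l), habs k i l]
  -- positive semidefiniteness
  have hPSDof : ∀ (N : ∀ k : Fin K, Matrix (Fin n) (Fin (m k)) ℤ),
      (∑ k, t k • ((N k * (N k)ᵀ).map ((↑) : ℤ → ℝ))).PosSemidef := by
    intro N
    have h := Bmat_gram N t ht 0 le_rfl
    rw [zero_smul, zero_add] at h
    rw [← h]
    have h2 : (Bmat N t 0)ᵀ = (Bmat N t 0)ᴴ :=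
      (Matrix.conjTranspose_eq_transpose_of_trivial _).symm
    rw [h2]
    exact Matrix.posSemidef_self_mul_conjTranspose _
  have hPSD : A.PosSemidef := hAdef ▸ hPSDof M
  have hPSD' : A'.PosSemidef := hA'def ▸ hPSDof M'
  have hev : ∀ i, 0 ≤ hA.eigenvalues i := fun i => hPSD.eigenvalues_nonneg i
  have hev' : ∀ i, 0 ≤ hA'.eigenvalues i := fun i => hPSD'.eigenvalues_nonneg i
  -- trace equality
  have htr : A'.trace = A.trace := by
    rw [hAdef, hA'def, Matrix.trace_sum, Matrix.trace_sum]
    refine Finset.sum_congr rfl (fun k _ => ?_)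
    rw [Matrix.trace_smul, Matrix.trace_smul]
    congr 1
    unfold Matrix.trace
    refine Finset.sum_congr rfl (fun i _ => ?_)
    simp only [Matrix.diag_apply, Matrix.map_apply, Matrix.mul_apply, Matrix.transpose_apply]
    push_cast
    refine Finset.sum_congr rfl (fun l _ => ?_)
    have h2 : ((M' k i l : ℝ)) ^ 2 = ((M k i l : ℝ)) ^ 2 := by exact_mod_cast hsq k i l
    nlinarith [h2]
  have htr_sum : ∑ i, hA'.eigenvalues i = ∑ i, hA.eigenvalues i := by
    rw [← trace_eq_sum_eigs hA, ← trace_eq_sum_eigs hA', htr]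
  -- determinant inequality
  have hdet : ∀ s : ℝ, 0 < s →
      ∏ i, (s + hA.eigenvalues i) ≤ ∏ i, (s + hA'.eigenvalues i) := by
    intro s hs
    rw [← det_shift hA s, ← det_shift hA' s, hAdef, hA'def]
    exact det_ineq M M' h01 hint hmod t ht s hs.le
  -- reduce to comparing the sums
  have hS'nn : 0 ≤ ∑ i, (hA'.eigenvalues i) ^ p :=
    Finset.sum_nonneg (fun i _ => Real.rpow_nonneg (hev' i) p)
  suffices hle : ∑ i, (hA'.eigenvalues i) ^ p ≤ ∑ i, (hA.eigenvalues i) ^ p by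
    exact Real.rpow_le_rpow hS'nn hle (by positivity)
  -- case split on p
  rcases eq_or_lt_of_le hp1 with hp1' | hp1'
  · -- p = 1
    simp only [← hp1', Real.rpow_one]
    exact le_of_eq htr_sum
  rcases eq_or_lt_of_le hp2 with hp2' | hp2'
  · -- p = 2
    have h2 : ∀ x : ℝ, 0 ≤ x → x ^ p = x ^ 2 := by
      intro x hx
      rw [hp2', show ((2:ℝ)) = ((2:ℕ):ℝ) from by norm_num, Real.rpow_natCast]
    rw [Finset.sum_congr rfl (fun i _ => h2 _ (hev i)),
      Finset.sum_congr rfl (fun i _ => h2 _ (hev' i)),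
      ← trace_sq_eq_sum_eigs_sq hA, ← trace_sq_eq_sum_eigs_sq hA']
    have hexp : ∀ (X : Matrix (Fin n) (Fin n) ℝ),
        (X * X).trace = ∑ i, ∑ j, X i j * X j i := by
      intro X
      simp [Matrix.trace, Matrix.diag, Matrix.mul_apply]
    rw [hexp, hexp]
    refine Finset.sum_le_sum (fun i _ => Finset.sum_le_sum (fun j _ => ?_))
    have hsymm : ∀ (X : Matrix (Fin n) (Fin n) ℝ), X.IsHermitian → X j i = X i j := by
      intro X hX
      conv_lhs => rw [← hX]
      simp [Matrix.conjTranspose_apply]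
    rw [hsymm A hA, hsymm A' hA']
    have habsA : |A' i j| ≤ A i j := by
      rw [hAdef, hA'def]
      simp only [Matrix.sum_apply, Matrix.smul_apply, Matrix.map_apply, Matrix.mul_apply,
        Matrix.transpose_apply, smul_eq_mul]
      refine le_trans (Finset.abs_sum_le_sum_abs _ _) (Finset.sum_le_sum (fun k _ => ?_))
      rw [abs_mul, abs_of_nonneg (ht k)]
      refine mul_le_mul_of_nonneg_left ?_ (ht k)
      rw [← Int.cast_abs]
      have hz : |∑ l, M' k i l * M' k j l| ≤ ∑ l, M k i l * M k j l := by
        refine le_trans (Finset.abs_sum_le_sum_abs _ _) (Finset.sum_le_sum (fun l _ => ?_))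
        rw [abs_mul, habs k i l, habs k j l]
      exact_mod_cast hz
    calc A' i j * A' i j = |A' i j| ^ 2 := by rw [sq_abs]; ring
    _ ≤ (A i j) ^ 2 := by
        have h0 : (0:ℝ) ≤ |A' i j| := abs_nonneg _
        nlinarith [habsA]
    _ = A i j * A i j := by ring
  -- 1 < p < 2 : integral representation
  set I1 : ℝ := ∫ s in Ioi (0:ℝ), F p 1 s with hI1
  have hI1pos : 0 < I1 := I1_pos hp1' hp2'
  have hrep : ∀ (ev : Fin n → ℝ), (∀ i, 0 ≤ ev i) →
      ∑ i, (ev i) ^ p = I1⁻¹ * ∫ s in Ioi (0:ℝ), ∑ i, F p (ev i) s := by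
    intro ev hevnn
    rw [integral_finset_sum _ (fun i _ => F_integrableOn hp1' hp2' (hevnn i)), Finset.mul_sum]
    exact Finset.sum_congr rfl (fun i _ => rpow_eq_integral hp1' hp2' (hevnn i))
  rw [hrep _ hev, hrep _ hev']
  refine mul_le_mul_of_nonneg_left ?_ (by positivity)
  refine setIntegral_mono_on
    (integrable_finset_sum _ (fun i _ => F_integrableOn hp1' hp2' (hev' i)))
    (integrable_finset_sum _ (fun i _ => F_integrableOn hp1' hp2' (hev i)))
    measurableSet_Ioi ?_
  intro s hs
  have hs0 : (0:ℝ) < s := hs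
  have hFsum : ∀ (ev : Fin n → ℝ),
      ∑ i, F p (ev i) s
        = s ^ (p-2) * ((∑ i, ev i) - s * ∑ i, Real.log (1 + ev i / s)) := by
    intro ev
    unfold F
    rw [← Finset.mul_sum, Finset.sum_sub_distrib, ← Finset.mul_sum]
  rw [hFsum, hFsum]
  have hlog : ∑ i, Real.log (1 + hA.eigenvalues i / s)
      ≤ ∑ i, Real.log (1 + hA'.eigenvalues i / s) := by
    have hrw : ∀ (ev : Fin n → ℝ), (∀ i, 0 ≤ ev i) →
        ∑ i, Real.log (1 + ev i / s) = Real.log (∏ i, (s + ev i)) - n * Real.log s := by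
      intro ev hevnn
      have h1 : ∀ i : Fin n, Real.log (1 + ev i / s) = Real.log (s + ev i) - Real.log s := by
        intro i
        rw [show (1:ℝ) + ev i / s = (s + ev i) / s from by field_simp,
          Real.log_div (by have := hevnn i; positivity) hs0.ne']
      rw [Finset.sum_congr rfl (fun i _ => h1 i), Finset.sum_sub_distrib,
        Real.log_prod (s := Finset.univ) (f := fun i => s + ev i) (fun i _ => by have := hevnn i; positivity)]
      simp [Finset.card_univ]
    rw [hrw _ hev, hrw _ hev']
    have hgap : Real.log (∏ i, (s + hA.eigenvalues i))
        ≤ Real.log (∏ i, (s + hA'.eigenvalues i)) :=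
      Real.log_le_log (Finset.prod_pos (fun i _ => by have := hev i; positivity)) (hdet s hs0)
    linarith
  refine mul_le_mul_of_nonneg_left ?_ (Real.rpow_nonneg hs0.le _)
  rw [htr_sum]
  have hmul := mul_le_mul_of_nonneg_left hlog hs0.le
  linarith
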